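/- arXiv:2402.11369 — 2 statements merged into one kernel-verified Lean document; each statement's English description precedes it below -/
import Mathlib

section
/- Suppose G₂ has trivial center. Then the perturbed direct products G₁ ×_{ε₁} G₂ and G₁ ×_{ε₂} G₂ admit an isomorphism φ with pr₂(φ(1,y)) = y for all y ∈ G₂ (a G₂-isomorphism) if and only if there exists an automorphism σ of G₁ such that (σ∘ε₁)·ε₂⁻¹ is a 2-coboundary, i.e. there exists η : G₂ → G₁ with σ(ε₁(y,y'))·ε₂(y,y')⁻¹ = η(y)·η(y')·η(yy')⁻¹ for all y,y' ∈ G₂. -/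
structure Cocycle (G₁ G₂ : Type*) [CommGroup G₁] [Group G₂] where
  f : G₂ → G₂ → G₁
  norm_left : ∀ g, f 1 g = 1
  norm_right : ∀ g, f g 1 = 1
  cocycle : ∀ g h k, f h g * f (h * g) k = f g k * f h (g * k)

variable {G₁ G₂ : Type*} [CommGroup G₁] [Group G₂]

/-- The perturbed direct product `G₁ ×_ε G₂`. -/
@[ext]
structure PP (ε : Cocycle G₁ G₂) where
  x : G₁
  y : G₂

namespace PP

variable {ε : Cocycle G₁ G₂}

instance : Mul (PP ε) := ⟨fun a b => ⟨a.x * b.x * ε.f a.y b.y, a.y * b.y⟩⟩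
instance : One (PP ε) := ⟨⟨1, 1⟩⟩
instance : Inv (PP ε) := ⟨fun a => ⟨a.x⁻¹ * (ε.f a.y a.y⁻¹)⁻¹, a.y⁻¹⟩⟩

@[simp] lemma mul_x (a b : PP ε) : (a * b).x = a.x * b.x * ε.f a.y b.y := rfl
@[simp] lemma mul_y (a b : PP ε) : (a * b).y = a.y * b.y := rfl
@[simp] lemma one_x : (1 : PP ε).x = 1 := rfl
@[simp] lemma one_y : (1 : PP ε).y = 1 := rfl
@[simp] lemma inv_x (a : PP ε) : (a⁻¹).x = a.x⁻¹ * (ε.f a.y a.y⁻¹)⁻¹ := rfl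
@[simp] lemma inv_y (a : PP ε) : (a⁻¹).y = a.y⁻¹ := rfl

lemma symm_inv (y : G₂) : ε.f y⁻¹ y = ε.f y y⁻¹ := by
  have h := ε.cocycle y⁻¹ y y
  simpa [ε.norm_left, ε.norm_right] using h.symm

instance : Group (PP ε) where
  mul_assoc a b c := by
    have h : ε.f a.y b.y * ε.f (a.y * b.y) c.y
        = ε.f b.y c.y * ε.f a.y (b.y * c.y) := ε.cocycle b.y a.y c.y
    ext
    · show a.x * b.x * ε.f a.y b.y * c.x * ε.f (a.y * b.y) c.y
        = a.x * (b.x * c.x * ε.f b.y c.y) * ε.f a.y (b.y * c.y)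
      calc a.x * b.x * ε.f a.y b.y * c.x * ε.f (a.y * b.y) c.y
          = a.x * b.x * c.x * (ε.f a.y b.y * ε.f (a.y * b.y) c.y) := by
            simp [mul_assoc, mul_comm, mul_left_comm]
        _ = a.x * b.x * c.x * (ε.f b.y c.y * ε.f a.y (b.y * c.y)) := by rw [h]
        _ = a.x * (b.x * c.x * ε.f b.y c.y) * ε.f a.y (b.y * c.y) := by
            simp [mul_assoc, mul_comm, mul_left_comm]
    · exact mul_assoc a.y b.y c.y
  one_mul a := by ext <;> simp [ε.norm_left]
  mul_one a := by ext <;> simp [ε.norm_right]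
  inv_mul_cancel a := by
    ext
    · show a.x⁻¹ * (ε.f a.y a.y⁻¹)⁻¹ * a.x * ε.f a.y⁻¹ a.y = (1 : G₁)
      rw [symm_inv]
      simp [mul_assoc, mul_comm, mul_left_comm]
    · exact inv_mul_cancel a.y

end PP

lemma decomp {ε : Cocycle G₁ G₂} (x : G₁) (y : G₂) :
    (⟨x, y⟩ : PP ε) = (⟨x, 1⟩ : PP ε) * ⟨1, y⟩ := by
  ext <;> simp [ε.norm_left]

theorem stmt9 (hZ : Subgroup.center G₂ = ⊥) (ε₁ ε₂ : Cocycle G₁ G₂) :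
    (∃ φ : PP ε₁ ≃* PP ε₂, ∀ y : G₂, (φ ⟨1, y⟩).y = y) ↔
      ∃ σ : G₁ ≃* G₁, ∃ η : G₂ → G₁, ∀ y y' : G₂,
        σ (ε₁.f y y') * (ε₂.f y y')⁻¹ = η y * η y' * (η (y * y'))⁻¹ := by
  constructor
  · rintro ⟨φ, hφ⟩
    -- the second component of φ ⟨x,1⟩ is central, hence trivial
    have hy1 : ∀ x : G₁, (φ (⟨x, 1⟩ : PP ε₁)).y = 1 := by
      intro x
      have hc : (φ (⟨x, 1⟩ : PP ε₁)).y ∈ Subgroup.center G₂ := by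
        rw [Subgroup.mem_center_iff]
        intro y
        have h1 : (⟨x, 1⟩ : PP ε₁) * ⟨1, y⟩ = ⟨1, y⟩ * ⟨x, 1⟩ := by
          ext <;> simp [ε₁.norm_left, ε₁.norm_right]
        have := congrArg (fun a => (φ a).y) h1
        simpa [map_mul, hφ] using this.symm
      rw [hZ] at hc
      simpa using hc
    -- φ preserves the second component
    have hy : ∀ a : PP ε₁, (φ a).y = a.y := by
      intro a
      have : (φ a).y = (φ (⟨a.x, 1⟩ * ⟨1, a.y⟩ : PP ε₁)).y := by
        rw [← decomp]
      rw [this, map_mul]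
      simp [hy1, hφ]
    have hysymm : ∀ a : PP ε₂, (φ.symm a).y = a.y := by
      intro a
      simpa using (hy (φ.symm a)).symm
    set σf : G₁ → G₁ := fun x => (φ (⟨x, 1⟩ : PP ε₁)).x with hσf
    set σg : G₁ → G₁ := fun x => (φ.symm (⟨x, 1⟩ : PP ε₂)).x with hσg
    have hφx : ∀ x : G₁, φ (⟨x, 1⟩ : PP ε₁) = ⟨σf x, 1⟩ := by
      intro x; ext
      · rfl
      · simp [hy1]
    have hφxsymm : ∀ x : G₁, φ.symm (⟨x, 1⟩ : PP ε₂) = ⟨σg x, 1⟩ := by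
      intro x; ext
      · rfl
      · simp [hysymm]
    have hli : ∀ x, σg (σf x) = x := by
      intro x
      have : φ.symm (⟨σf x, 1⟩ : PP ε₂) = ⟨x, 1⟩ := by
        rw [← hφx]; simp
      rw [hφxsymm] at this
      exact congrArg PP.x this
    have hri : ∀ x, σf (σg x) = x := by
      intro x
      have : φ (⟨σg x, 1⟩ : PP ε₁) = ⟨x, 1⟩ := by
        rw [← hφxsymm]; simp
      rw [hφx] at this
      exact congrArg PP.x this
    have hmul : ∀ x x' : G₁, σf (x * x') = σf x * σf x' := by
      intro x x'
      have h1 : (⟨x, 1⟩ : PP ε₁) * ⟨x', 1⟩ = ⟨x * x', 1⟩ := by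
        ext <;> simp [ε₁.norm_left]
      have := congrArg φ h1
      rw [map_mul, hφx, hφx, hφx] at this
      have := congrArg PP.x this.symm
      simpa [ε₂.norm_left] using this
    refine ⟨⟨⟨σf, σg, hli, hri⟩, hmul⟩, fun y => (φ (⟨1, y⟩ : PP ε₁)).x, ?_⟩
    intro y y'
    have h1 : (⟨1, y⟩ : PP ε₁) * ⟨1, y'⟩ = ⟨ε₁.f y y', y * y'⟩ := by
      ext <;> simp
    have h2 := congrArg φ h1
    rw [map_mul, decomp (ε := ε₁) (ε₁.f y y') (y * y'), map_mul, hφx] at h2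
    have h3 := congrArg PP.x h2
    simp only [PP.mul_x, PP.mul_y, hφ, PP.one_y, PP.one_x, ε₂.norm_left, mul_one] at h3
    have hσε : σf (ε₁.f y y') = (φ (⟨1, y⟩ : PP ε₁)).x * (φ (⟨1, y'⟩ : PP ε₁)).x *
        ε₂.f y y' * ((φ (⟨1, y * y'⟩ : PP ε₁)).x)⁻¹ := eq_mul_inv_of_mul_eq h3.symm
    simp only [MulEquiv.coe_mk, Equiv.coe_fn_mk]
    rw [hσε, mul_inv_eq_iff_eq_mul]
    simp [mul_assoc, mul_comm, mul_left_comm]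
  · rintro ⟨σ, η, h⟩
    have hη1 : η 1 = 1 := by
      have := h 1 1
      simp [ε₁.norm_left, ε₂.norm_left] at this
      -- this : 1 = η 1 * η 1 * (η 1)⁻¹ or similar
      simpa [mul_assoc] using this.symm
    refine ⟨⟨⟨fun a => ⟨σ a.x * η a.y, a.y⟩,
        fun a => ⟨σ.symm (a.x * (η a.y)⁻¹), a.y⟩, ?_, ?_⟩, ?_⟩, ?_⟩
    · intro a; ext <;> simp
    · intro a; ext <;> simp
    · intro a b
      ext
      · show σ (a.x * b.x * ε₁.f a.y b.y) * η (a.y * b.y)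
          = σ a.x * η a.y * (σ b.x * η b.y) * ε₂.f a.y b.y
        have hk := h a.y b.y
        have hk2 : σ (ε₁.f a.y b.y) = η a.y * η b.y * (η (a.y * b.y))⁻¹ * ε₂.f a.y b.y :=
          mul_inv_eq_iff_eq_mul.mp hk
        rw [map_mul, map_mul, hk2]
        simp [mul_assoc, mul_comm, mul_left_comm]
      · rfl
    · intro y
      rfl
end

section
/- Suppose φ = (φ₁₁, φ₁₂; φ₂₁, id) is a G₂-isomorphism from G₁ ×_{ε₁} G₂ to G₁ ×_{ε₂} G₂ such that φ₁₁ restricts to the identity on H = Im(ε₁) (the subgroup generated by the values of ε₁). Then the image of ε₁ lies in the kernel of φ₂₁, and ε₁·ε₂⁻¹ is a 2-coboundary: ε₁(y,y')·ε₂(y,y')⁻¹ = φ₁₂(y)·φ₁₂(y')·φ₁₂(yy')⁻¹ for all y,y' ∈ G₂. -/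
variable {G₁ G₂ : Type*} [CommGroup G₁] [Group G₂]

theorem stmt11 (ε₁ ε₂ : Cocycle G₁ G₂) (φ : PP ε₁ ≃* PP ε₂)
    (h22 : ∀ y : G₂, (φ ⟨1, y⟩).y = y)
    (h11 : ∀ x ∈ Subgroup.closure {x : G₁ | ∃ y y' : G₂, ε₁.f y y' = x},
      (φ ⟨x, 1⟩).x = x) :
    (∀ y y' : G₂, (φ ⟨ε₁.f y y', 1⟩).y = 1) ∧
      ∀ y y' : G₂, ε₁.f y y' * (ε₂.f y y')⁻¹ =
        (φ ⟨1, y⟩).x * (φ ⟨1, y'⟩).x * ((φ ⟨1, y * y'⟩).x)⁻¹ := by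
  have key : ∀ y y' : G₂, (⟨1, y⟩ : PP ε₁) * ⟨1, y'⟩ =
      (⟨ε₁.f y y', 1⟩ : PP ε₁) * ⟨1, y * y'⟩ := by
    intro y y'; ext <;> simp [ε₁.norm_left]
  have hc : ∀ y y' : G₂, (φ ⟨ε₁.f y y', 1⟩).y = 1 := by
    intro y y'
    have E := congrArg PP.y (congrArg φ (key y y'))
    rw [map_mul, map_mul] at E
    simp only [PP.mul_y, h22] at E
    exact mul_right_cancel (b := y * y') (by simpa using E.symm)
  refine ⟨hc, ?_⟩
  intro y y'
  have E := congrArg PP.x (congrArg φ (key y y'))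
  rw [map_mul, map_mul] at E
  simp only [PP.mul_x, h22, hc y y', ε₂.norm_left, mul_one,
    h11 _ (Subgroup.subset_closure ⟨y, y', rfl⟩)] at E
  rw [← div_eq_mul_inv, ← div_eq_mul_inv, div_eq_div_iff_mul_eq_mul]
  exact E.symm
end
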